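/- Let m, s ∈ ℕ and let k_1,…,k_{3m} ∈ ℕ satisfy k_1 + ⋯ + k_{3m} = m·s. Over Σ = {a,b,c}, let u_start = b^m, u_end = (a^s b c³)^m, n = 3m, and for 1 ≤ i ≤ 3m let the i-th rule be w_i → w'_i with w_i = b and w'_i = a^{k_i} b c. Then this instance satisfies REP if and only if the multiset {k_1,…,k_{3m}} can be partitioned into m disjoint groups of three elements each, such that the elements of each group sum exactly to s. -/

import Mathlib

/-!
Framework for REP (Rewriting with Programmed Rules) and the associated word
equations α_μ = β_μ.  Constants: `Option A` models Σ ∪ {#}, where `none` is the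
fresh letter `#` and `some a` embeds a ∈ Σ.  Variables are modelled by `ℕ`
(the variable x_i is `i`).
-/

namespace REP

/-- `u_end` is obtained from `u_start` by applying each of the `n` rules
`w i → w' i` (for `i = 1, …, n`) once, in order, each application replacing one
occurrence of `w i` by `w' i`. -/
def SatisfiesREP {A : Type} (n : ℕ) (ustart uend : List A) (w w' : ℕ → List A) : Prop :=
  ∃ u : ℕ → List A, u 0 = ustart ∧ u n = uend ∧
    ∀ i, 1 ≤ i → i ≤ n → ∃ s t : List A,
      u (i - 1) = s ++ w i ++ t ∧ u i = s ++ w' i ++ t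

/-- Apply a substitution (identity on constants) to a pattern. -/
def applySub {A : Type} (h : ℕ → List (Option A)) : List (Option A ⊕ ℕ) → List (Option A)
  | [] => []
  | Sum.inl a :: rest => a :: applySub h rest
  | Sum.inr x :: rest => h x ++ applySub h rest

/-- Embed a constant word over Σ into patterns over Σ ∪ {#}. -/
def lift {A : Type} (u : List A) : List (Option A ⊕ ℕ) := u.map (fun a => Sum.inl (some a))

/-- Embed a constant word over Σ into words over Σ ∪ {#}. -/
def liftW {A : Type} (u : List A) : List (Option A) := u.map some

/-- The fresh letter `#` as a pattern symbol. -/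
def hash {A : Type} : Option A ⊕ ℕ := Sum.inl none

/-- `x_1 w_1 x_2 w_2 ⋯ x_n w_n`. -/
def blocks {A : Type} (w : ℕ → List A) : ℕ → List (Option A ⊕ ℕ)
  | 0 => []
  | n + 1 => blocks w n ++ (Sum.inr (n + 1) :: lift (w (n + 1)))

/-- α_μ = `x_1 w_1 x_2 w_2 ⋯ x_n w_n x_{n+1} # u_end`. -/
def alphaMu {A : Type} (n : ℕ) (uend : List A) (w : ℕ → List A) : List (Option A ⊕ ℕ) :=
  blocks w n ++ [Sum.inr (n + 1), hash] ++ lift uend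

/-- β_μ = `# u_start x_1 w'_1 x_2 w'_2 ⋯ x_n w'_n x_{n+1}`. -/
def betaMu {A : Type} (n : ℕ) (ustart : List A) (w' : ℕ → List A) : List (Option A ⊕ ℕ) :=
  hash :: lift ustart ++ blocks w' n ++ [Sum.inr (n + 1)]

/-- `x_1 w_1 ⋯ x_i w_i`. -/
def alphaPrefix {A : Type} (w : ℕ → List A) (i : ℕ) : List (Option A ⊕ ℕ) := blocks w i

/-- `# u_start x_1 w'_1 ⋯ w'_{i-1} x_i`. -/
def betaPrefix {A : Type} (ustart : List A) (w' : ℕ → List A) (i : ℕ) :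
    List (Option A ⊕ ℕ) :=
  hash :: lift ustart ++ blocks w' (i - 1) ++ [Sum.inr i]

/-- `h` is a solution of the equation α = β. -/
def IsSolution {A : Type} (h : ℕ → List (Option A)) (α β : List (Option A ⊕ ℕ)) : Prop :=
  applySub h α = applySub h β

/-- `h` is an overlapping solution of α_μ = β_μ : it is a solution and, for every
`1 ≤ i ≤ n`, there is `z_i` such that `w_i z_i` is a suffix of `h(x_i)` and
`h(# u_start x_1 w'_1 ⋯ w'_{i-1} x_i) = h(x_1 w_1 ⋯ x_i w_i) z_i`. -/
def OverlappingSolution {A : Type} (n : ℕ) (ustart uend : List A) (w w' : ℕ → List A)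
    (h : ℕ → List (Option A)) : Prop :=
  IsSolution h (alphaMu n uend w) (betaMu n ustart w') ∧
  ∀ i, 1 ≤ i → i ≤ n → ∃ z : List (Option A),
    (liftW (w i) ++ z) <:+ h i ∧
    applySub h (betaPrefix ustart w' i) = applySub h (alphaPrefix w i) ++ z

/-- `n`-fold concatenation `u^n` of the word `u`. -/
def npow {A : Type} (u : List A) : ℕ → List A
  | 0 => []
  | n + 1 => u ++ npow u n

/-- `y_i`, the suffix of `h(x_i)` of length `|v_i| - |w_i|`. -/
def ySuf {A : Type} (h : ℕ → List (Option A)) (v : ℕ → List (Option A)) (w : ℕ → List A)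
    (i : ℕ) : List (Option A) :=
  (h i).drop ((h i).length - ((v i).length - (w i).length))

/-- Two words are conjugate if `u = st` and `v = ts` for some words `s`, `t`. -/
def Conj {B : Type} (u v : List B) : Prop := ∃ s t : List B, u = s ++ t ∧ v = t ++ s

/-- The words `v_1, …, v_n` associated with an overlapping solution `h`
(as guaranteed by the characterisation of overlapping solutions):
`v_i` is a prefix of `h(x_i)`, `|w_i| ≤ |v_i|`, `h(x_i) w_i` is a prefix of `v_i^ω`
(i.e. of `v_i^m` for all sufficiently large `m`), `v_1 = # u_start`,
`v_i = y_{i-1} w'_{i-1}` for `2 ≤ i ≤ n`, and `y_n w'_n h(x_{n+1}) = h(x_{n+1}) # u_end`. -/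
def AssocWords {A : Type} (n : ℕ) (ustart uend : List A) (w w' : ℕ → List A)
    (h : ℕ → List (Option A)) (v : ℕ → List (Option A)) : Prop :=
  (∀ i, 1 ≤ i → i ≤ n →
    v i <+: h i ∧ (w i).length ≤ (v i).length ∧
    ∃ N : ℕ, ∀ m : ℕ, N ≤ m → (h i ++ liftW (w i)) <+: npow (v i) m) ∧
  v 1 = none :: liftW ustart ∧
  (∀ i, 2 ≤ i → i ≤ n → v i = ySuf h v w (i - 1) ++ liftW (w' (i - 1))) ∧
  ySuf h v w n ++ liftW (w' n) ++ h (n + 1) = h (n + 1) ++ none :: liftW uend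

end REP

namespace REPaux

/-- One block `a^x b c^y` over `Fin 3` (a=0, b=1, c=2). -/
def blk (p : ℕ × ℕ) : List (Fin 3) :=
  List.replicate p.1 0 ++ 1 :: List.replicate p.2 2

/-- Concatenation of blocks. -/
def cat : List (ℕ × ℕ) → List (Fin 3)
  | [] => []
  | p :: l => blk p ++ cat l

lemma cat_append (l1 l2 : List (ℕ × ℕ)) : cat (l1 ++ l2) = cat l1 ++ cat l2 := by
  induction l1 with
  | nil => rfl
  | cons p l ih => simp [cat, ih]

lemma cat_eq_nil {l : List (ℕ × ℕ)} (h : cat l = []) : l = [] := by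
  cases l with
  | nil => rfl
  | cons p l => simp [cat, blk] at h

lemma uniq_left {α : Type*} {a : α} :
    ∀ {s s' t t' : List α}, a ∉ s → a ∉ s' → s ++ a :: t = s' ++ a :: t' →
      s = s' ∧ t = t' := by
  intro s
  induction s with
  | nil =>
    intro s' t t' _ h2 h
    cases s' with
    | nil => simpa using h
    | cons y s' =>
      simp only [List.nil_append, List.cons_append, List.cons.injEq] at h
      exact absurd (h.1 ▸ List.mem_cons_self) h2
  | cons x s ih =>
    intro s' t t' h1 h2 h
    cases s' with
    | nil =>
      simp only [List.nil_append, List.cons_append, List.cons.injEq] at h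
      exact absurd (h.1 ▸ List.mem_cons_self) h1
    | cons y s' =>
      simp only [List.cons_append, List.cons.injEq] at h
      obtain ⟨rfl, h⟩ := h
      obtain ⟨h3, h4⟩ := ih (fun hm => h1 (List.mem_cons_of_mem _ hm))
        (fun hm => h2 (List.mem_cons_of_mem _ hm)) h
      exact ⟨by rw [h3], h4⟩

lemma uniq_right {α : Type*} {a : α} :
    ∀ {s' s t t' : List α}, a ∉ s' → a ∉ t' → s ++ a :: t = s' ++ a :: t' →
      s = s' ∧ t = t' := by
  intro s'
  induction s' with
  | nil =>
    intro s t t' _ h2 h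
    cases s with
    | nil => simpa using h
    | cons x s =>
      simp only [List.nil_append, List.cons_append, List.cons.injEq] at h
      exact absurd (h.2 ▸ (by simp : a ∈ s ++ a :: t)) h2
  | cons y s' ih =>
    intro s t t' h1 h2 h
    cases s with
    | nil =>
      simp only [List.nil_append, List.cons_append, List.cons.injEq] at h
      exact absurd (h.1 ▸ List.mem_cons_self) h1
    | cons x s =>
      simp only [List.cons_append, List.cons.injEq] at h
      obtain ⟨rfl, h⟩ := h
      obtain ⟨h3, h4⟩ := ih (fun hm => h1 (List.mem_cons_of_mem _ hm)) h2 h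
      exact ⟨by rw [h3], h4⟩

lemma one_not_mem_rep0 (n : ℕ) : (1 : Fin 3) ∉ List.replicate n (0 : Fin 3) := by
  simp [List.mem_replicate]

lemma one_not_mem_rep2 (n : ℕ) : (1 : Fin 3) ∉ List.replicate n (2 : Fin 3) := by
  simp [List.mem_replicate]

lemma cat_ne_two_cons : ∀ (l : List (ℕ × ℕ)) (y : List (Fin 3)), cat l ≠ 2 :: y := by
  intro l y h
  cases l with
  | nil => simp [cat] at h
  | cons p l =>
    obtain ⟨pa, pc⟩ := p
    cases pa with
    | zero => simp [cat, blk] at h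
    | succ n => simp [cat, blk, List.replicate_succ] at h

lemma two_prefix : ∀ (a b : ℕ) (l l' : List (ℕ × ℕ)),
    List.replicate a 2 ++ cat l = List.replicate b 2 ++ cat l' →
    a = b ∧ cat l = cat l' := by
  intro a
  induction a with
  | zero =>
    intro b l l' h
    cases b with
    | zero => simpa using h
    | succ b =>
      simp only [List.replicate_succ, List.replicate_zero, List.nil_append,
        List.cons_append] at h
      exact absurd h (cat_ne_two_cons l _)
  | succ a ih =>
    intro b l l' h
    cases b with
    | zero =>
      simp only [List.replicate_succ, List.replicate_zero, List.nil_append,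
        List.cons_append] at h
      exact absurd h.symm (cat_ne_two_cons l' _)
    | succ b =>
      simp only [List.replicate_succ, List.cons_append, List.cons.injEq] at h
      obtain ⟨h1, h2⟩ := ih b l l' h.2
      exact ⟨by omega, h2⟩

lemma cat_inj : ∀ (l l' : List (ℕ × ℕ)), l.length = l'.length → cat l = cat l' → l = l' := by
  intro l
  induction l with
  | nil =>
    intro l' hl _
    cases l' with
    | nil => rfl
    | cons q l' => simp at hl
  | cons p l ih =>
    intro l' hl h
    cases l' with
    | nil => simp at hl
    | cons q l' =>
      obtain ⟨pa, pc⟩ := p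
      obtain ⟨qa, qc⟩ := q
      have h' : List.replicate pa (0 : Fin 3) ++ 1 :: (List.replicate pc 2 ++ cat l)
          = List.replicate qa 0 ++ 1 :: (List.replicate qc 2 ++ cat l') := by
        simpa [cat, blk] using h
      obtain ⟨e1, e2⟩ := uniq_left (one_not_mem_rep0 pa) (one_not_mem_rep0 qa) h'
      have hpa : pa = qa := by
        have := congrArg List.length e1; simpa using this
      obtain ⟨e3, e4⟩ := two_prefix pc qc l l' e2
      have := ih l' (by simpa using hl) e4
      simp [hpa, e3, this]

lemma occ : ∀ (l : List (ℕ × ℕ)) (s t : List (Fin 3)), cat l = s ++ 1 :: t →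
    ∃ l1 p l2, l = l1 ++ p :: l2 ∧ s = cat l1 ++ List.replicate p.1 0 ∧
      t = List.replicate p.2 2 ++ cat l2 := by
  intro l
  induction l with
  | nil => intro s t h; simp [cat] at h
  | cons p l ih =>
    intro s t h
    have h' : blk p ++ cat l = s ++ 1 :: t := h
    rcases List.append_eq_append_iff.mp h' with ⟨a', ha1, ha2⟩ | ⟨c', hc1, hc2⟩
    · obtain ⟨l1, q, l2, rfl, hs, ht⟩ := ih a' t ha2
      exact ⟨p :: l1, q, l2, rfl, by simp [ha1, hs, cat], ht⟩
    · cases c' with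
      | nil =>
        simp only [List.nil_append] at hc2
        obtain ⟨l1, q, l2, rfl, hs, ht⟩ := ih [] t hc2.symm
        have h1 : cat l1 = [] ∧ List.replicate q.1 (0 : Fin 3) = [] :=
          List.append_eq_nil_iff.mp hs.symm
        have hl1 : l1 = [] := cat_eq_nil h1.1
        have hq1 : q.1 = 0 := by
          have := congrArg List.length h1.2; simpa using this
        subst hl1
        refine ⟨[p], q, l2, by simp, ?_, ht⟩
        simp only [List.append_nil] at hc1
        simp [hc1, cat, hq1]
      | cons x c'' =>
        simp only [List.cons_append, List.cons.injEq] at hc2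
        obtain ⟨rfl, ht⟩ := hc2
        have hb : s ++ 1 :: c'' = List.replicate p.1 0 ++ 1 :: List.replicate p.2 2 := by
          rw [← hc1]; rfl
        obtain ⟨e1, e2⟩ := uniq_right (one_not_mem_rep0 p.1) (one_not_mem_rep2 p.2) hb
        exact ⟨[], p, l, by simp, by simp [cat, e1], by rw [ht, e2]⟩

lemma cat_replicate_00 (m : ℕ) :
    cat (List.replicate m ((0 : ℕ), (0 : ℕ))) = List.replicate m (1 : Fin 3) := by
  induction m with
  | zero => rfl
  | succ m ih =>
    rw [List.replicate_succ, List.replicate_succ]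
    simp only [cat, blk, List.replicate_zero, List.nil_append, List.cons_append]
    rw [ih]

lemma cat_replicate_s3 (s m : ℕ) :
    cat (List.replicate m (s, (3 : ℕ)))
      = REP.npow (List.replicate s (0 : Fin 3) ++ [(1 : Fin 3)] ++ List.replicate 3 (2 : Fin 3)) m := by
  induction m with
  | zero => rfl
  | succ m ih => rw [List.replicate_succ]; simp only [cat, blk, REP.npow]; simp [ih]

lemma step_eq (l1 l2 : List (ℕ × ℕ)) (x y c : ℕ) :
    cat (l1 ++ (x, y) :: l2)
      = (cat l1 ++ List.replicate x 0) ++ [1] ++ (List.replicate y 2 ++ cat l2) ∧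
    cat (l1 ++ (x + c, y + 1) :: l2)
      = (cat l1 ++ List.replicate x 0) ++ (List.replicate c 0 ++ [1, 2])
          ++ (List.replicate y 2 ++ cat l2) := by
  constructor
  · rw [cat_append]
    simp only [cat, blk, List.append_nil]
    simp [List.append_assoc]
  · rw [cat_append]
    simp only [cat, blk, List.append_nil]
    rw [List.replicate_add, List.replicate_succ]
    simp only [List.append_assoc, List.cons_append, List.nil_append]


/-- Number of `a`-letters in block `j` after the first `i` rules, assignment `g`. -/
def acnt (k g : ℕ → ℕ) (i j : ℕ) : ℕ :=
  ∑ t ∈ (Finset.Icc 1 i).filter (fun t => g t = j + 1), k t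

/-- Number of `c`-letters in block `j` after the first `i` rules, assignment `g`. -/
def ccnt (g : ℕ → ℕ) (i j : ℕ) : ℕ :=
  ((Finset.Icc 1 i).filter (fun t => g t = j + 1)).card

lemma acnt_zero (k g : ℕ → ℕ) (j : ℕ) : acnt k g 0 j = 0 := by
  rw [acnt, Finset.Icc_eq_empty (by omega)]; simp

lemma ccnt_zero (g : ℕ → ℕ) (j : ℕ) : ccnt g 0 j = 0 := by
  rw [ccnt, Finset.Icc_eq_empty (by omega)]; simp

lemma filter_succ (g : ℕ → ℕ) (i j : ℕ) :
    (Finset.Icc 1 (i+1)).filter (fun t => g t = j + 1)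
      = if g (i+1) = j + 1 then insert (i+1) ((Finset.Icc 1 i).filter (fun t => g t = j + 1))
        else (Finset.Icc 1 i).filter (fun t => g t = j + 1) := by
  rw [← Finset.insert_Icc_right_eq_Icc_add_one (by omega : (1:ℕ) ≤ i + 1), Finset.filter_insert]

lemma not_mem_filter (g : ℕ → ℕ) (i j : ℕ) :
    i + 1 ∉ (Finset.Icc 1 i).filter (fun t => g t = j + 1) := by
  simp only [Finset.mem_filter, Finset.mem_Icc]
  omega

lemma acnt_succ_eq {g : ℕ → ℕ} {i j : ℕ} (k : ℕ → ℕ) (h : g (i+1) = j + 1) :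
    acnt k g (i+1) j = acnt k g i j + k (i+1) := by
  rw [acnt, filter_succ, if_pos h, Finset.sum_insert (not_mem_filter g i j), acnt]
  omega

lemma acnt_succ_ne {g : ℕ → ℕ} {i j : ℕ} (k : ℕ → ℕ) (h : ¬ g (i+1) = j + 1) :
    acnt k g (i+1) j = acnt k g i j := by
  rw [acnt, filter_succ, if_neg h, acnt]

lemma ccnt_succ_eq {g : ℕ → ℕ} {i j : ℕ} (h : g (i+1) = j + 1) :
    ccnt g (i+1) j = ccnt g i j + 1 := by
  rw [ccnt, filter_succ, if_pos h, Finset.card_insert_of_notMem (not_mem_filter g i j), ccnt]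

lemma ccnt_succ_ne {g : ℕ → ℕ} {i j : ℕ} (h : ¬ g (i+1) = j + 1) :
    ccnt g (i+1) j = ccnt g i j := by
  rw [ccnt, filter_succ, if_neg h, ccnt]

lemma acnt_congr {g g' : ℕ → ℕ} {i : ℕ} (k : ℕ → ℕ) (j : ℕ)
    (h : ∀ t, 1 ≤ t → t ≤ i → g t = g' t) : acnt k g i j = acnt k g' i j := by
  rw [acnt, acnt]
  congr 1
  apply Finset.filter_congr
  intro t ht
  rw [Finset.mem_Icc] at ht
  rw [h t ht.1 ht.2]

lemma ccnt_congr {g g' : ℕ → ℕ} {i : ℕ} (j : ℕ)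
    (h : ∀ t, 1 ≤ t → t ≤ i → g t = g' t) : ccnt g i j = ccnt g' i j := by
  rw [ccnt, ccnt]
  congr 1
  apply Finset.filter_congr
  intro t ht
  rw [Finset.mem_Icc] at ht
  rw [h t ht.1 ht.2]

lemma getElem?_middle (l1 : List (ℕ × ℕ)) (p : ℕ × ℕ) (l2 : List (ℕ × ℕ)) :
    (l1 ++ p :: l2)[l1.length]? = some p := by
  rw [List.getElem?_append_right (le_refl _), Nat.sub_self]
  simp

lemma getElem?_middle_ne (l1 : List (ℕ × ℕ)) (p q : ℕ × ℕ) (l2 : List (ℕ × ℕ)) (j : ℕ)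
    (h : j ≠ l1.length) : (l1 ++ p :: l2)[j]? = (l1 ++ q :: l2)[j]? := by
  rcases Nat.lt_or_ge j l1.length with h' | h'
  · rw [List.getElem?_append_left h', List.getElem?_append_left h']
  · rw [List.getElem?_append_right h', List.getElem?_append_right h']
    obtain ⟨d, hd⟩ : ∃ d, j - l1.length = d + 1 := ⟨j - l1.length - 1, by omega⟩
    rw [hd]
    simp

end REPaux

/-!
STATEMENT 1: the reduction from 3-Partition to REP.  Σ = {a, b, c} is modelled
by `Fin 3` with a = 0, b = 1, c = 2.  The numbers are `k 1, …, k (3m)`.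
-/

open REPaux in
open REP in
theorem stmt1 (m s : ℕ) (k : ℕ → ℕ)
    (hsum : ∑ i ∈ Finset.Icc 1 (3 * m), k i = m * s) :
    SatisfiesREP (3 * m)
      (List.replicate m (1 : Fin 3))
      (npow (List.replicate s (0 : Fin 3) ++ [(1 : Fin 3)] ++ List.replicate 3 (2 : Fin 3)) m)
      (fun _ => [(1 : Fin 3)])
      (fun i => List.replicate (k i) (0 : Fin 3) ++ [(1 : Fin 3), (2 : Fin 3)]) ↔
    ∃ g : ℕ → ℕ,
      (∀ i, 1 ≤ i → i ≤ 3 * m → 1 ≤ g i ∧ g i ≤ m) ∧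
      (∀ j, 1 ≤ j → j ≤ m →
        ((Finset.Icc 1 (3 * m)).filter (fun i => g i = j)).card = 3 ∧
        ∑ i ∈ (Finset.Icc 1 (3 * m)).filter (fun i => g i = j), k i = s) := by
  constructor
  · rintro ⟨u, hu0, hun, hstep⟩
    have key : ∀ i, i ≤ 3 * m → ∃ (l : List (ℕ × ℕ)) (g : ℕ → ℕ),
        u i = cat l ∧ l.length = m ∧ (∀ t, 1 ≤ t → t ≤ i → 1 ≤ g t ∧ g t ≤ m) ∧
        ∀ j, j < m → l[j]? = some (acnt k g i j, ccnt g i j) := by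
      intro i
      induction i with
      | zero =>
        intro _
        refine ⟨List.replicate m (0, 0), fun _ => 1, ?_, by simp, by omega, ?_⟩
        · rw [hu0, cat_replicate_00]
        · intro j hj
          rw [List.getElem?_replicate, if_pos hj, acnt_zero, ccnt_zero]
      | succ i ih =>
        intro hi
        obtain ⟨l, g, hul, hlen, hg, hval⟩ := ih (by omega)
        obtain ⟨S, T, h1, h2⟩ := hstep (i + 1) (by omega) (by omega)
        rw [show i + 1 - 1 = i from rfl, hul] at h1
        have h1' : cat l = S ++ 1 :: T := by simpa using h1
        obtain ⟨l1, p, l2, rfl, hS, hT⟩ := occ l S T h1'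
        obtain ⟨pa, pc⟩ := p
        have hj₀ : l1.length < m := by
          rw [← hlen]; simp
        have hpval : (pa, pc) = (acnt k g i l1.length, ccnt g i l1.length) := by
          have := hval l1.length hj₀
          rw [getElem?_middle] at this
          simpa using this
        have hpa : pa = acnt k g i l1.length := by
          simpa using congrArg Prod.fst hpval
        have hpc : pc = ccnt g i l1.length := by
          simpa using congrArg Prod.snd hpval
        set g' : ℕ → ℕ := Function.update g (i + 1) (l1.length + 1) with hg'def
        have hupd : ∀ t, 1 ≤ t → t ≤ i → g t = g' t := by
          intro t _ h2'
          rw [hg'def, Function.update_of_ne (by omega)]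
        have hgi : g' (i + 1) = l1.length + 1 := by
          rw [hg'def, Function.update_self]
        refine ⟨l1 ++ (pa + k (i + 1), pc + 1) :: l2, g', ?_, by simpa using hlen, ?_, ?_⟩
        · rw [h2, hS, hT, hpa, hpc]
          exact ((step_eq l1 l2 (acnt k g i l1.length) (ccnt g i l1.length) (k (i + 1))).2).symm
        · intro t ht1 ht2
          rcases Nat.lt_or_ge t (i + 1) with h' | h'
          · rw [← hupd t ht1 (by omega)]
            exact hg t ht1 (by omega)
          · have : t = i + 1 := by omega
            rw [this, hgi]
            omega
        · intro j hj
          by_cases hjj : j = l1.length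
          · subst hjj
            rw [getElem?_middle, acnt_succ_eq k hgi, ccnt_succ_eq hgi,
              ← acnt_congr k l1.length hupd, ← ccnt_congr l1.length hupd, ← hpa, ← hpc]
          · rw [getElem?_middle_ne l1 _ (pa, pc) l2 j hjj, hval j hj,
              acnt_succ_ne k (by rw [hgi]; omega), ccnt_succ_ne (by rw [hgi]; omega),
              ← acnt_congr k j hupd, ← ccnt_congr j hupd]
    obtain ⟨l, g, hul, hlen, hg, hval⟩ := key (3 * m) le_rfl
    have hrep : l = List.replicate m (s, 3) := by
      apply cat_inj
      · simp [hlen]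
      · rw [← hul, hun, cat_replicate_s3]
    refine ⟨g, hg, ?_⟩
    intro j hj1 hj2
    have hv := hval (j - 1) (by omega)
    rw [hrep, List.getElem?_replicate, if_pos (by omega : j - 1 < m)] at hv
    simp only [Option.some.injEq, Prod.mk.injEq] at hv
    have hj' : j - 1 + 1 = j := by omega
    constructor
    · have hc := hv.2
      rw [ccnt, hj'] at hc
      exact hc.symm
    · have hs' := hv.1
      rw [acnt, hj'] at hs'
      exact hs'.symm
  · rintro ⟨g, hg, hpart⟩
    refine ⟨fun i => cat ((List.range m).map fun j => (acnt k g i j, ccnt g i j)), ?_, ?_, ?_⟩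
    · have he : (List.range m).map (fun j => (acnt k g 0 j, ccnt g 0 j))
          = List.replicate m ((0:ℕ), (0:ℕ)) := by
        apply List.eq_replicate_iff.mpr
        refine ⟨by simp, ?_⟩
        intro b hb
        simp only [List.mem_map, List.mem_range] at hb
        obtain ⟨j, _, rfl⟩ := hb
        rw [acnt_zero, ccnt_zero]
      show cat ((List.range m).map fun j => (acnt k g 0 j, ccnt g 0 j)) = _
      rw [he, cat_replicate_00]
    · have he : (List.range m).map (fun j => (acnt k g (3 * m) j, ccnt g (3 * m) j))
          = List.replicate m (s, 3) := by
        apply List.eq_replicate_iff.mpr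
        refine ⟨by simp, ?_⟩
        intro b hb
        simp only [List.mem_map, List.mem_range] at hb
        obtain ⟨j, hj, rfl⟩ := hb
        obtain ⟨hc, hs⟩ := hpart (j + 1) (by omega) (by omega)
        rw [acnt, ccnt]
        exact Prod.ext (by simpa using hs) (by simpa using hc)
      show cat ((List.range m).map fun j => (acnt k g (3 * m) j, ccnt g (3 * m) j)) = _
      rw [he, cat_replicate_s3]
    · intro i hi1 hi2
      obtain ⟨i, rfl⟩ : ∃ i', i = i' + 1 := ⟨i - 1, by omega⟩
      have hgb := hg (i + 1) (by omega) (by omega)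
      have hgi : g (i + 1) = (g (i + 1) - 1) + 1 := by omega
      set j₀ := g (i + 1) - 1 with hj₀def
      have hj₀m : j₀ + 1 ≤ m := by omega
      have hsplit : List.range m
          = List.range j₀ ++ j₀ :: (List.range (m - (j₀ + 1))).map (fun x => j₀ + 1 + x) := by
        conv_lhs => rw [show m = (j₀ + 1) + (m - (j₀ + 1)) by omega]
        rw [List.range_add, List.range_succ]
        simp [List.append_assoc]
      refine ⟨cat ((List.range j₀).map fun j => (acnt k g i j, ccnt g i j))
            ++ List.replicate (acnt k g i j₀) 0,
          List.replicate (ccnt g i j₀) 2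
            ++ cat (((List.range (m - (j₀ + 1))).map (fun x => j₀ + 1 + x)).map
                fun j => (acnt k g i j, ccnt g i j)), ?_, ?_⟩
      · show cat ((List.range m).map fun j => (acnt k g (i + 1 - 1) j, ccnt g (i + 1 - 1) j)) = _
        rw [show i + 1 - 1 = i from rfl, hsplit, List.map_append, List.map_cons]
        exact (step_eq _ _ (acnt k g i j₀) (ccnt g i j₀) (k (i + 1))).1
      · show cat ((List.range m).map fun j => (acnt k g (i + 1) j, ccnt g (i + 1) j)) = _
        rw [hsplit, List.map_append, List.map_cons]
        have e1 : (List.range j₀).map (fun j => (acnt k g (i + 1) j, ccnt g (i + 1) j))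
            = (List.range j₀).map (fun j => (acnt k g i j, ccnt g i j)) := by
          apply List.map_congr_left
          intro j hj
          rw [List.mem_range] at hj
          rw [acnt_succ_ne k (by omega), ccnt_succ_ne (by omega)]
        have e2 : ((List.range (m - (j₀ + 1))).map (fun x => j₀ + 1 + x)).map
              (fun j => (acnt k g (i + 1) j, ccnt g (i + 1) j))
            = ((List.range (m - (j₀ + 1))).map (fun x => j₀ + 1 + x)).map
              (fun j => (acnt k g i j, ccnt g i j)) := by
          apply List.map_congr_left
          intro j hj
          simp only [List.mem_map, List.mem_range] at hj
          obtain ⟨x, _, rfl⟩ := hj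
          rw [acnt_succ_ne k (by omega), ccnt_succ_ne (by omega)]
        rw [e1, e2, acnt_succ_eq k hgi, ccnt_succ_eq hgi]
        exact (step_eq _ _ (acnt k g i j₀) (ccnt g i j₀) (k (i + 1))).2
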